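/- arXiv:1811.05015 — 4 statements merged into one kernel-verified Lean document; each statement's English description precedes it below -/
import Mathlib

section
/- For a team of size n and any feature with value counts (r_1, …, r_L) summing to n, the number of conflict triangles Σ_j C(r_j,2)(n − r_j) is at most C(⌈n/2⌉,2)·⌊n/2⌋ + C(⌊n/2⌋,2)·⌈n/2⌉, i.e., the maximum over all value distributions is attained by a split into two groups of sizes ⌈n/2⌉ and ⌊n/2⌋. -/
open Finset

lemma two_mul_choose_two (m : ℕ) : 2 * m.choose 2 = m * (m - 1) := by
  induction m with
  | zero => rfl
  | succ k ih =>
    rw [Nat.choose_succ_succ, Nat.choose_one_right, Nat.mul_add, ih]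
    rcases k with _ | j
    · rfl
    · simp only [Nat.succ_sub_one]
      ring

lemma double_pair (x y : ℕ) :
    x * (x - 1) * y + y * (y - 1) * x = x * y * (x + y - 2) := by
  rcases x with _ | p
  · simp
  rcases y with _ | q
  · simp
  simp only [Nat.succ_sub_one]
  have h : p + 1 + (q + 1) - 2 = p + q := by omega
  rw [h]
  ring

lemma double_val (x y : ℕ) :
    2 * (x.choose 2 * y + y.choose 2 * x) = x * y * (x + y - 2) := by
  calc 2 * (x.choose 2 * y + y.choose 2 * x)
      = 2 * x.choose 2 * y + 2 * y.choose 2 * x := by ring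
    _ = x * (x - 1) * y + y * (y - 1) * x := by
        rw [two_mul_choose_two, two_mul_choose_two]
    _ = x * y * (x + y - 2) := double_pair x y

lemma prod_le_balanced (n u v : ℕ) (h : u + v = n) :
    u * v ≤ n / 2 * ((n + 1) / 2) := by
  rcases le_total u v with huv | huv
  · obtain ⟨d, rfl⟩ := Nat.exists_eq_add_of_le huv
    have hd : d / 2 + (d + 1) / 2 = d := by omega
    have h1 : n / 2 = u + d / 2 := by omega
    have h2 : (n + 1) / 2 = u + (d + 1) / 2 := by omega
    rw [h1, h2]
    nlinarith [Nat.zero_le (d / 2 * ((d + 1) / 2))]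
  · obtain ⟨d, rfl⟩ := Nat.exists_eq_add_of_le huv
    have hd : d / 2 + (d + 1) / 2 = d := by omega
    have h1 : n / 2 = v + d / 2 := by omega
    have h2 : (n + 1) / 2 = v + (d + 1) / 2 := by omega
    rw [h1, h2]
    nlinarith [Nat.zero_le (d / 2 * ((d + 1) / 2))]

/-- The two-part value is at most the balanced-split value. -/
lemma pair_le (n u v : ℕ) (h : u + v = n) :
    u.choose 2 * v + v.choose 2 * u ≤
      ((n + 1) / 2).choose 2 * (n / 2) + (n / 2).choose 2 * ((n + 1) / 2) := by
  have h1 := double_val u v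
  rw [h] at h1
  have h2 := double_val ((n + 1) / 2) (n / 2)
  have hab : (n + 1) / 2 + n / 2 = n := by omega
  rw [hab] at h2
  have hprod : u * v ≤ (n + 1) / 2 * (n / 2) := by
    have := prod_le_balanced n u v h
    calc u * v ≤ n / 2 * ((n + 1) / 2) := this
      _ = (n + 1) / 2 * (n / 2) := Nat.mul_comm _ _
  have hfin : u * v * (n - 2) ≤ (n + 1) / 2 * (n / 2) * (n - 2) :=
    Nat.mul_le_mul_right _ hprod
  omega

/-- Merging two parts whose sum is small enough does not decrease the count. -/
lemma step (u v w : ℕ) (h : u + v ≤ 2 * w + 2) :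
    u.choose 2 * (v + w) + v.choose 2 * (u + w) ≤ (u + v).choose 2 * w := by
  have hsum : (u + v).choose 2 = u.choose 2 + v.choose 2 + u * v := by
    have h1 := two_mul_choose_two (u + v)
    have h2 := two_mul_choose_two u
    have h3 := two_mul_choose_two v
    have key : (u + v) * (u + v - 1) = u * (u - 1) + v * (v - 1) + 2 * (u * v) := by
      rcases u with _ | p
      · simp
      rcases v with _ | q
      · simp
      simp only [Nat.succ_sub_one]
      have h4 : p + 1 + (q + 1) - 1 = p + q + 1 := by omega
      rw [h4]
      ring
    omega
  have hmain : u.choose 2 * v + v.choose 2 * u ≤ u * v * w := by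
    have hd := double_val u v
    have hle : u * v * (u + v - 2) ≤ 2 * (u * v * w) := by
      calc u * v * (u + v - 2) ≤ u * v * (2 * w) :=
            Nat.mul_le_mul_left _ (by omega)
        _ = 2 * (u * v * w) := by ring
    omega
  have e1 : u.choose 2 * (v + w) = u.choose 2 * v + u.choose 2 * w := by ring
  have e2 : v.choose 2 * (u + w) = v.choose 2 * u + v.choose 2 * w := by ring
  have e3 : (u.choose 2 + v.choose 2 + u * v) * w
      = u.choose 2 * w + v.choose 2 * w + u * v * w := by ring
  rw [hsum, e1, e2, e3]
  omega

lemma key_multiset (n : ℕ) : ∀ (k : ℕ) (s : Multiset ℕ), s.card = k → s.sum = n →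
    (s.map (fun x => x.choose 2 * (n - x))).sum ≤
      ((n + 1) / 2).choose 2 * (n / 2) + (n / 2).choose 2 * ((n + 1) / 2) := by
  intro k
  induction k with
  | zero =>
    intro s hcard _
    rw [Multiset.card_eq_zero] at hcard
    subst hcard
    simp
  | succ k ih =>
    intro s hcard hsum
    rcases Nat.lt_or_ge k 2 with hk | hk
    · -- card ≤ 2 : base cases
      interval_cases k
      · rw [Multiset.card_eq_one] at hcard
        obtain ⟨a, rfl⟩ := hcard
        simp only [Multiset.sum_singleton] at hsum
        subst hsum
        simp
      · rw [Multiset.card_eq_two] at hcard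
        obtain ⟨u, v, rfl⟩ := hcard
        have hsum' : u + v = n := by simpa using hsum
        have h1 : n - u = v := by omega
        have h2 : n - v = u := by omega
        have heq : (({u, v} : Multiset ℕ).map (fun x => x.choose 2 * (n - x))).sum
            = u.choose 2 * v + v.choose 2 * u := by
          simp [h1, h2]
        rw [heq]
        exact pair_le n u v hsum'
    · -- card ≥ 3 : merge two small parts
      obtain ⟨x, hx⟩ : ∃ x, x ∈ s := Multiset.card_pos_iff_exists_mem.mp (by omega)
      obtain ⟨t1, rfl⟩ := Multiset.exists_cons_of_mem hx
      rw [Multiset.card_cons] at hcard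
      obtain ⟨y, hy⟩ : ∃ y, y ∈ t1 := Multiset.card_pos_iff_exists_mem.mp (by omega)
      obtain ⟨t2, rfl⟩ := Multiset.exists_cons_of_mem hy
      rw [Multiset.card_cons] at hcard
      obtain ⟨z, hz⟩ : ∃ z, z ∈ t2 := Multiset.card_pos_iff_exists_mem.mp (by omega)
      obtain ⟨t, rfl⟩ := Multiset.exists_cons_of_mem hz
      rw [Multiset.card_cons] at hcard
      simp only [Multiset.sum_cons] at hsum
      have hxyz : x + y + z ≤ n := by
        have := Nat.zero_le t.sum
        omega
      -- general merge step
      have merge : ∀ (u v : ℕ) (rest : Multiset ℕ),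
          u + v + rest.sum = n → 3 * (u + v) ≤ 2 * n + 2 →
          rest.card = k - 1 →
          ((u ::ₘ v ::ₘ rest).map (fun x => x.choose 2 * (n - x))).sum ≤
            ((n + 1) / 2).choose 2 * (n / 2) + (n / 2).choose 2 * ((n + 1) / 2) := by
        intro u v rest hsum' hsmall hcard'
        have huv : u + v ≤ n := by
          have := Nat.zero_le rest.sum
          omega
        set w := n - (u + v) with hw
        have h1 : n - u = v + w := by omega
        have h2 : n - v = u + w := by omega
        have h3 : n - (u + v) = w := by omega
        have hstep := step u v w (by omega)
        have hle : ((u ::ₘ v ::ₘ rest).map (fun x => x.choose 2 * (n - x))).sum ≤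
            (((u + v) ::ₘ rest).map (fun x => x.choose 2 * (n - x))).sum := by
          simp only [Multiset.map_cons, Multiset.sum_cons]
          rw [h1, h2, h3]
          omega
        refine hle.trans (ih ((u + v) ::ₘ rest) ?_ ?_)
        · rw [Multiset.card_cons, hcard']
          omega
        · rw [Multiset.sum_cons]
          omega
      have hcardt : t.card = k - 2 := by omega
      have hchoice : 3 * (x + y) ≤ 2 * n + 2 ∨ 3 * (x + z) ≤ 2 * n + 2 ∨
          3 * (y + z) ≤ 2 * n + 2 := by omega
      rcases hchoice with hc | hc | hc
      · exact merge x y (z ::ₘ t)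
          (by rw [Multiset.sum_cons]; omega) hc
          (by rw [Multiset.card_cons, hcardt]; omega)
      · have hperm : (x ::ₘ y ::ₘ z ::ₘ t) = x ::ₘ z ::ₘ y ::ₘ t := by
          rw [Multiset.cons_swap y z]
        rw [hperm]
        exact merge x z (y ::ₘ t)
          (by rw [Multiset.sum_cons]; omega) hc
          (by rw [Multiset.card_cons, hcardt]; omega)
      · have hperm : (x ::ₘ y ::ₘ z ::ₘ t) = y ::ₘ z ::ₘ x ::ₘ t := by
          rw [Multiset.cons_swap x y, Multiset.cons_swap x z]
        rw [hperm]
        exact merge y z (x ::ₘ t)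
          (by rw [Multiset.sum_cons]; omega) hc
          (by rw [Multiset.card_cons, hcardt]; omega)

/-- For any value distribution (r_1,…,r_L) summing to n, the conflict-triangle count
Σ_j C(r_j,2)(n − r_j) is at most that of a split into groups of sizes ⌈n/2⌉, ⌊n/2⌋. -/
theorem conflict_sum_le_balanced_split
    (n L : ℕ) (r : Fin L → ℕ) (hr : ∑ j, r j = n) :
    ∑ j, (r j).choose 2 * (n - r j) ≤
      ((n + 1) / 2).choose 2 * (n / 2) + (n / 2).choose 2 * ((n + 1) / 2) := by
  have h1 : ∑ j, (r j).choose 2 * (n - r j) =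
      ((Multiset.map r Finset.univ.val).map (fun x => x.choose 2 * (n - x))).sum := by
    rw [Multiset.map_map]
    rfl
  have h2 : (Multiset.map r Finset.univ.val).sum = n := by
    rw [← hr]
    rfl
  rw [h1]
  exact key_multiset n (Multiset.map r Finset.univ.val).card _ rfl h2
end

section
/- Let T be a team of size n, f a feature with value counts r_v, and let a new individual i with feature value v be added to T. Then the number of conflict triangles of T ∪ {i} for f equals the number of conflict triangles of T for f plus r_v·(n − r_v) + Σ_{w ≠ v} C(r_w, 2). -/
open Classical Finset

/-- A 3-subset τ is a conflict triangle for feature f: exactly two members share their f-value. -/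
def isConflict {α V : Type*} (f : α → V) (τ : Finset α) : Prop :=
  ∃ i ∈ τ, ∃ j ∈ τ, ∃ k ∈ τ, i ≠ j ∧ i ≠ k ∧ j ≠ k ∧ f i = f j ∧ f k ≠ f i

/-- Number of conflict triangles of team T for feature f. -/
noncomputable def conflictCount {α V : Type*} (T : Finset α) (f : α → V) : ℕ :=
  ((T.powersetCard 3).filter (fun τ => isConflict f τ)).card

lemma conflict_iff {α V : Type*} (f : α → V) (i j k : α)
    (hij : i ≠ j) (hik : i ≠ k) (hjk : j ≠ k) :
    isConflict f {i, j, k} ↔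
      (f j = f i ∧ f k ≠ f i) ∨ (f k = f i ∧ f j ≠ f i) ∨ (f j = f k ∧ f j ≠ f i) := by
  constructor
  · rintro ⟨a, ha, b, hb, c, hc, hab, hac, hbc, h1, h2⟩
    simp only [mem_insert, mem_singleton] at ha hb hc
    rcases ha with rfl|rfl|rfl <;> rcases hb with rfl|rfl|rfl <;> rcases hc with rfl|rfl|rfl <;>
      simp_all <;> tauto
  · rintro (⟨h1, h2⟩|⟨h1, h2⟩|⟨h1, h2⟩)
    · exact ⟨i, by simp, j, by simp, k, by simp, hij, hik, hjk, h1.symm, h2⟩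
    · exact ⟨i, by simp, k, by simp, j, by simp, hik, hij, hjk.symm, h1.symm, h2⟩
    · exact ⟨j, by simp, k, by simp, i, by simp, hjk, hij.symm, hik.symm, h1,
        fun h => h2 h.symm⟩

lemma step1 {α V : Type*} (T : Finset α) (f : α → V) (i : α) (hi : i ∉ T) :
    conflictCount (insert i T) f = conflictCount T f +
      ((T.powersetCard 2).filter (fun s => isConflict f (insert i s))).card := by
  classical
  unfold conflictCount
  have heq : ((insert i T).powersetCard 3).filter (fun τ => isConflict f τ)
      = ((T.powersetCard 3).filter (fun τ => isConflict f τ)) ∪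
        (((T.powersetCard 2).filter (fun s => isConflict f (insert i s))).image (insert i)) := by
    ext τ
    simp only [mem_union, mem_filter, mem_powersetCard, mem_image]
    constructor
    · rintro ⟨⟨hsub, hcard⟩, hconf⟩
      by_cases hiτ : i ∈ τ
      · right
        refine ⟨τ.erase i, ⟨⟨?_, ?_⟩, ?_⟩, insert_erase hiτ⟩
        · intro x hx
          rcases mem_erase.mp hx with ⟨hxi, hxτ⟩
          rcases mem_insert.mp (hsub hxτ) with rfl|h
          · exact absurd rfl hxi
          · exact h
        · rw [card_erase_of_mem hiτ, hcard]
        · rwa [insert_erase hiτ]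
      · left
        refine ⟨⟨?_, hcard⟩, hconf⟩
        intro x hx
        rcases mem_insert.mp (hsub hx) with rfl|h
        · exact absurd hx hiτ
        · exact h
    · rintro (⟨⟨hsub, hcard⟩, hconf⟩ | ⟨s, ⟨⟨hsub, hcard⟩, hconf⟩, rfl⟩)
      · exact ⟨⟨hsub.trans (subset_insert _ _), hcard⟩, hconf⟩
      · refine ⟨⟨insert_subset_insert _ hsub, ?_⟩, hconf⟩
        rw [card_insert_of_notMem (fun h => hi (hsub h)), hcard]
  rw [heq, card_union_of_disjoint, card_image_of_injOn]
  · intro s hs t ht h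
    simp only [coe_filter, Set.mem_setOf_eq, mem_coe, mem_powersetCard] at hs ht
    have his : i ∉ s := fun hx => hi (hs.1.1 hx)
    have hit : i ∉ t := fun hx => hi (ht.1.1 hx)
    rw [← erase_insert his, h, erase_insert hit]
  · rw [disjoint_left]
    rintro τ h1 h2
    rcases mem_image.mp h2 with ⟨s, _, rfl⟩
    have : i ∈ insert i s := mem_insert_self _ _
    exact hi ((mem_powersetCard.mp (mem_filter.mp h1).1).1 this)

lemma step2 {α V : Type*} (T : Finset α) (f : α → V) (i : α) (hi : i ∉ T) :
    ((T.powersetCard 2).filter (fun s => isConflict f (insert i s))).card =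
      (T.filter (fun j => f j = f i)).card *
          (T.card - (T.filter (fun j => f j = f i)).card) +
        ∑ w ∈ (T.image f).erase (f i), ((T.filter (fun j => f j = w)).card.choose 2) := by
  classical
  set Sv := T.filter (fun j => f j = f i) with hSv
  have heq : (T.powersetCard 2).filter (fun s => isConflict f (insert i s)) =
      ((Sv ×ˢ (T \ Sv)).image (fun p => ({p.1, p.2} : Finset α))) ∪
      ((T.image f).erase (f i)).biUnion (fun w => (T.filter (fun j => f j = w)).powersetCard 2) := by
    ext s
    simp only [mem_union, mem_filter, mem_powersetCard, mem_image, mem_biUnion, mem_product,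
      mem_sdiff, mem_erase, Prod.exists]
    constructor
    · rintro ⟨⟨hsub, hcard⟩, hconf⟩
      obtain ⟨j, k, hjk, rfl⟩ := card_eq_two.mp hcard
      have hj : j ∈ T := hsub (by simp)
      have hk : k ∈ T := hsub (by simp)
      have hij : i ≠ j := fun h => hi (h ▸ hj)
      have hik : i ≠ k := fun h => hi (h ▸ hk)
      rcases (conflict_iff f i j k hij hik hjk).mp hconf with ⟨h1, h2⟩|⟨h1, h2⟩|⟨h1, h2⟩
      · exact Or.inl ⟨j, k, ⟨mem_filter.mpr ⟨hj, h1⟩, hk,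
          fun h => h2 (mem_filter.mp h).2⟩, rfl⟩
      · exact Or.inl ⟨k, j, ⟨mem_filter.mpr ⟨hk, h1⟩, hj,
          fun h => h2 (mem_filter.mp h).2⟩, pair_comm k j⟩
      · refine Or.inr ⟨f j, ⟨h2, ⟨j, hj, rfl⟩⟩, ?_, card_pair hjk⟩
        intro x hx
        rcases mem_insert.mp hx with rfl|hx
        · exact mem_filter.mpr ⟨hj, rfl⟩
        · rw [mem_singleton] at hx; subst hx
          exact mem_filter.mpr ⟨hk, h1.symm⟩
    · rintro (⟨j, k, ⟨hj, hk, hknot⟩, rfl⟩ | ⟨w, ⟨hwv, hw⟩, hsub, hcard⟩)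
      · have hjT : j ∈ T := (mem_filter.mp hj).1
        have hjv : f j = f i := (mem_filter.mp hj).2
        have hkv : f k ≠ f i := fun h => hknot (mem_filter.mpr ⟨hk, h⟩)
        have hjk : j ≠ k := fun h => hkv (h ▸ hjv)
        have hij : i ≠ j := fun h => hi (h ▸ hjT)
        have hik : i ≠ k := fun h => hi (h ▸ hk)
        refine ⟨⟨?_, card_pair hjk⟩, (conflict_iff f i j k hij hik hjk).mpr
          (Or.inl ⟨hjv, hkv⟩)⟩
        intro x hx
        rcases mem_insert.mp hx with rfl|hx
        · exact hjT
        · rw [mem_singleton] at hx; subst hx; exact hk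
      · obtain ⟨j, k, hjk, rfl⟩ := card_eq_two.mp hcard
        have hjw : f j = w := (mem_filter.mp (hsub (by simp))).2
        have hkw : f k = w := (mem_filter.mp (hsub (by simp))).2
        have hjT : j ∈ T := (mem_filter.mp (hsub (by simp))).1
        have hkT : k ∈ T := (mem_filter.mp (hsub (by simp))).1
        have hij : i ≠ j := fun h => hi (h ▸ hjT)
        have hik : i ≠ k := fun h => hi (h ▸ hkT)
        refine ⟨⟨?_, card_pair hjk⟩, (conflict_iff f i j k hij hik hjk).mpr
          (Or.inr (Or.inr ⟨hjw.trans hkw.symm, fun h => hwv (hjw ▸ h)⟩))⟩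
        intro x hx
        rcases mem_insert.mp hx with rfl|hx
        · exact hjT
        · rw [mem_singleton] at hx; subst hx; exact hkT
  rw [heq, card_union_of_disjoint, card_image_of_injOn, card_product, card_sdiff_of_subset (filter_subset _ _),
    card_biUnion]
  · congr 1
    exact Finset.sum_congr rfl (fun w _ => card_powersetCard 2 _)
  · -- disjointness of the biUnion
    intro w hw w' hw' hww'
    rw [Function.onFun, disjoint_left]
    intro s hs hs'
    have h2 : s.card = 2 := (mem_powersetCard.mp hs).2
    obtain ⟨x, y, hxy, rfl⟩ := card_eq_two.mp h2
    have hx : x ∈ ({x, y} : Finset α) := mem_insert_self _ _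
    have e1 := (mem_filter.mp ((mem_powersetCard.mp hs).1 hx)).2
    have e2 := (mem_filter.mp ((mem_powersetCard.mp hs').1 hx)).2
    exact hww' (e1.symm.trans e2)
  · -- injOn
    rintro ⟨a, b⟩ hab ⟨c, d⟩ hcd h
    simp only [mem_coe, mem_product, mem_sdiff] at hab hcd
    have hav : f a = f i := (mem_filter.mp hab.1).2
    have hbv : f b ≠ f i := fun hh => hab.2.2 (mem_filter.mpr ⟨hab.2.1, hh⟩)
    have hcv : f c = f i := (mem_filter.mp hcd.1).2
    have hdv : f d ≠ f i := fun hh => hcd.2.2 (mem_filter.mpr ⟨hcd.2.1, hh⟩)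
    simp only at h
    have ha : a ∈ ({c, d} : Finset α) := h ▸ mem_insert_self a {b}
    have hb : b ∈ ({c, d} : Finset α) := h ▸ (by simp)
    have hac : a = c := by
      rcases mem_insert.mp ha with rfl|ha'
      · rfl
      · rw [mem_singleton] at ha'; subst ha'; exact absurd hav hdv
    have hbd : b = d := by
      rcases mem_insert.mp hb with rfl|hb'
      · exact absurd hcv hbv
      · exact mem_singleton.mp hb'
    simp [hac, hbd]
  · -- disjoint A' B'
    rw [disjoint_left]
    rintro s hs hs'
    rcases mem_image.mp hs with ⟨⟨a, b⟩, hab, rfl⟩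
    rcases mem_biUnion.mp hs' with ⟨w, hw, hsw⟩
    have hav : f a = f i := (mem_filter.mp (mem_product.mp hab).1).2
    have haw : f a = w := (mem_filter.mp ((mem_powersetCard.mp hsw).1 (mem_insert_self a {b}))).2
    exact (mem_erase.mp hw).1 (haw ▸ hav)

/-- Adding an individual i with value f i = v to a team T of size n increases the
conflict-triangle count by r_v·(n − r_v) + Σ_{w ≠ v} C(r_w,2). -/
theorem conflictCount_insert
    {α V : Type*} (T : Finset α) (f : α → V) (i : α) (hi : i ∉ T)
    (n : ℕ) (hn : T.card = n) :
    conflictCount (insert i T) f =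
      conflictCount T f +
        ((T.filter (fun j => f j = f i)).card *
            (n - (T.filter (fun j => f j = f i)).card) +
          ∑ w ∈ (T.image f).erase (f i),
            ((T.filter (fun j => f j = w)).card.choose 2)) := by
  subst hn
  rw [step1 T f i hi, step2 T f i hi]
end

section
/- Let G' be a graph on vertex set V, and for each edge e = {u,v} of G' define a feature f_e on V taking one value on {u,v} and a distinct value on each other vertex. Consider a partition of V into teams each of size k ≥ 3. Then for each team S and each edge e of G', the number of conflict triangles of S for f_e equals (k − 2) if both endpoints of e lie in S, and 0 otherwise; hence the total faultline potential (sum over teams and features of conflict-triangle counts) equals (k − 2) times the number of edges of G' with both endpoints in the same team. -/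
open Classical Finset

lemma conflictCount_pairFeature {V W : Type*} [DecidableEq V] (f : V → W) (u v : V)
    (huv : u ≠ v)
    (h1 : f u = f v) (h2 : ∀ w, w ≠ u → w ≠ v → f w ≠ f u)
    (h3 : ∀ w w', w ≠ u → w ≠ v → w' ≠ u → w' ≠ v → w ≠ w' → f w ≠ f w')
    (S : Finset V) :
    conflictCount S f = if u ∈ S ∧ v ∈ S then S.card - 2 else 0 := by
  have pair : ∀ i j : V, i ≠ j → f i = f j → (i = u ∧ j = v) ∨ (i = v ∧ j = u) := by
    intro i j hij hfij
    by_cases hiu : i = u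
    · subst hiu
      by_cases hjv : j = v
      · exact Or.inl ⟨rfl, hjv⟩
      · exact absurd hfij.symm (h2 j (Ne.symm hij) hjv)
    · by_cases hiv : i = v
      · subst hiv
        by_cases hju : j = u
        · exact Or.inr ⟨rfl, hju⟩
        · exact absurd (hfij.symm.trans h1.symm) (h2 j hju (Ne.symm hij))
      · by_cases hju : j = u
        · exact absurd (hju ▸ hfij) (h2 i hiu hiv)
        · by_cases hjv : j = v
          · exact absurd ((hjv ▸ hfij).trans h1.symm) (h2 i hiu hiv)
          · exact absurd hfij (h3 i j hiu hiv hju hjv hij)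
  unfold conflictCount
  split_ifs with hS
  · obtain ⟨hu, hv⟩ := hS
    have himg : ((S.powersetCard 3).filter (fun τ => isConflict f τ)) =
        (S \ {u, v}).image (fun w => insert u (insert v {w})) := by
      ext τ
      simp only [mem_filter, mem_powersetCard, mem_image, mem_sdiff, mem_insert,
        mem_singleton]
      constructor
      · rintro ⟨⟨hsub, hc3⟩, i, hi, j, hj, k, hk, hij, hik, hjk, hfij, hfk⟩
        have hku : k ≠ u ∧ k ≠ v := by
          rcases pair i j hij hfij with ⟨rfl, rfl⟩ | ⟨rfl, rfl⟩
          · exact ⟨hik.symm, hjk.symm⟩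
          · exact ⟨hjk.symm, hik.symm⟩
        have huv' : u ∈ τ ∧ v ∈ τ := by
          rcases pair i j hij hfij with ⟨rfl, rfl⟩ | ⟨rfl, rfl⟩
          · exact ⟨hi, hj⟩
          · exact ⟨hj, hi⟩
        refine ⟨k, ⟨hsub hk, not_or.mpr hku⟩, ?_⟩
        have hsub2 : insert u (insert v ({k} : Finset V)) ⊆ τ := by
          intro x hx
          simp only [mem_insert, mem_singleton] at hx
          rcases hx with rfl | rfl | rfl
          · exact huv'.1
          · exact huv'.2
          · exact hk
        have hc2 : (insert u (insert v ({k} : Finset V))).card = 3 := by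
          rw [card_insert_of_notMem (by simp [huv, Ne.symm hku.1]),
            card_insert_of_notMem (by simp [Ne.symm hku.2]), card_singleton]
        exact eq_of_subset_of_card_le hsub2 (by omega)
      · rintro ⟨w, ⟨hw, hwuv⟩, rfl⟩
        rw [not_or] at hwuv
        have hc2 : (insert u (insert v ({w} : Finset V))).card = 3 := by
          rw [card_insert_of_notMem (by simp [huv, Ne.symm hwuv.1]),
            card_insert_of_notMem (by simp [Ne.symm hwuv.2]), card_singleton]
        refine ⟨⟨?_, hc2⟩, u, by simp, v, by simp, w, by simp, huv,
          Ne.symm hwuv.1, Ne.symm hwuv.2, h1, h2 w hwuv.1 hwuv.2⟩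
        intro x hx
        simp only [mem_insert, mem_singleton] at hx
        rcases hx with rfl | rfl | rfl
        · exact hu
        · exact hv
        · exact hw
    have hinj : Set.InjOn (fun w => insert u (insert v ({w} : Finset V)))
        ↑(S \ {u, v}) := by
      intro w hw w' hw' heq
      simp only [mem_coe, mem_sdiff, mem_insert, mem_singleton, not_or] at hw hw'
      have heq' : insert u (insert v ({w} : Finset V)) =
          insert u (insert v ({w'} : Finset V)) := heq
      have : w ∈ insert u (insert v ({w'} : Finset V)) := heq' ▸ (by simp)
      simp only [mem_insert, mem_singleton] at this
      rcases this with rfl | rfl | rfl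
      · exact absurd rfl hw.2.1
      · exact absurd rfl hw.2.2
      · rfl
    have hsub' : ({u, v} : Finset V) ⊆ S := by
      intro x hx
      simp only [mem_insert, mem_singleton] at hx
      rcases hx with rfl | rfl
      · exact hu
      · exact hv
    rw [himg, card_image_of_injOn hinj, card_sdiff_of_subset hsub',
      show ({u, v} : Finset V).card = 2 from by
        rw [card_insert_of_notMem (by simp [huv]), card_singleton]]
  · rw [card_eq_zero, filter_eq_empty_iff]
    rintro τ hτ ⟨i, hi, j, hj, k, hk, hij, hik, hjk, hfij, hfk⟩
    rw [mem_powersetCard] at hτ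
    rcases pair i j hij hfij with ⟨rfl, rfl⟩ | ⟨rfl, rfl⟩
    · exact hS ⟨hτ.1 hi, hτ.1 hj⟩
    · exact hS ⟨hτ.1 hj, hτ.1 hi⟩


/-- Faultline reduction: with one feature per edge (endpoints share a value, all
other vertices get unique values), each team S contributes k−2 conflict triangles
per edge inside S and 0 otherwise; the total faultline potential is (k−2) times the
number of edges with both endpoints in the same team. -/
theorem faultline_reduction
    {V W : Type*} [Fintype V] [DecidableEq V]
    (G : SimpleGraph V) [DecidableRel G.Adj]
    (F : Sym2 V → V → W)
    (hF : ∀ e ∈ G.edgeFinset, ∀ u v : V, e = s(u, v) →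
      F e u = F e v ∧ (∀ w : V, w ∉ e → F e w ≠ F e u) ∧
        (∀ w w' : V, w ∉ e → w' ∉ e → w ≠ w' → F e w ≠ F e w'))
    (P : Finset (Finset V)) (k : ℕ) (hk : 3 ≤ k)
    (hcard : ∀ S ∈ P, S.card = k)
    (hpart : ∀ x : V, ∃! S, S ∈ P ∧ x ∈ S) :
    (∀ S ∈ P, ∀ e ∈ G.edgeFinset, ∀ u v : V, e = s(u, v) →
      conflictCount S (F e) = if u ∈ S ∧ v ∈ S then k - 2 else 0) ∧
    ∑ S ∈ P, ∑ e ∈ G.edgeFinset, conflictCount S (F e) =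
      (k - 2) * (G.edgeFinset.filter (fun e => ∃ S ∈ P, ∀ x ∈ e, x ∈ S)).card := by
  have main : ∀ S ∈ P, ∀ e ∈ G.edgeFinset, ∀ u v : V, e = s(u, v) →
      conflictCount S (F e) = if u ∈ S ∧ v ∈ S then k - 2 else 0 := by
    intro S hS e he u v hev
    have hadj : G.Adj u v := by
      rw [SimpleGraph.mem_edgeFinset, hev, SimpleGraph.mem_edgeSet] at he
      exact he
    have huv : u ≠ v := hadj.ne
    obtain ⟨hf1, hf2, hf3⟩ := hF e he u v hev
    have h2' : ∀ w, w ≠ u → w ≠ v → F e w ≠ F e u := fun w h h' =>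
      hf2 w (by rw [hev, Sym2.mem_iff]; push_neg; exact ⟨h, h'⟩)
    have h3' : ∀ w w', w ≠ u → w ≠ v → w' ≠ u → w' ≠ v → w ≠ w' →
        F e w ≠ F e w' := fun w w' h1 h2 h3 h4 h5 =>
      hf3 w w' (by rw [hev, Sym2.mem_iff]; push_neg; exact ⟨h1, h2⟩)
        (by rw [hev, Sym2.mem_iff]; push_neg; exact ⟨h3, h4⟩) h5
    rw [conflictCount_pairFeature (F e) u v huv hf1 h2' h3' S, hcard S hS]
  refine ⟨main, ?_⟩
  rw [Finset.sum_comm]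
  have step : ∀ e ∈ G.edgeFinset,
      ∑ S ∈ P, conflictCount S (F e) =
        if (∃ S ∈ P, ∀ x ∈ e, x ∈ S) then k - 2 else 0 := by
    intro e he
    revert he
    induction e using Sym2.ind with
    | _ u v =>
      intro he
      have hsum : ∑ S ∈ P, conflictCount S (F s(u, v)) =
          ∑ S ∈ P, (if u ∈ S ∧ v ∈ S then k - 2 else 0) :=
        Finset.sum_congr rfl fun S hS => main S hS _ he u v rfl
      rw [hsum]
      have hcond : (∃ S ∈ P, ∀ x ∈ s(u, v), x ∈ S) ↔ (∃ S ∈ P, u ∈ S ∧ v ∈ S) := by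
        constructor
        · rintro ⟨S, hS, h⟩
          exact ⟨S, hS, h u (by simp), h v (by simp)⟩
        · rintro ⟨S, hS, hu, hv⟩
          refine ⟨S, hS, fun x hx => ?_⟩
          rcases Sym2.mem_iff.mp hx with rfl | rfl <;> assumption
      by_cases hex : ∃ S ∈ P, u ∈ S ∧ v ∈ S
      · obtain ⟨S₀, hS₀, hu0, hv0⟩ := hex
        have hfil : P.filter (fun S => u ∈ S ∧ v ∈ S) = {S₀} := by
          ext S
          simp only [mem_filter, mem_singleton]
          constructor
          · rintro ⟨hS, huS, _⟩
            exact (hpart u).unique ⟨hS, huS⟩ ⟨hS₀, hu0⟩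
          · rintro rfl
            exact ⟨hS₀, hu0, hv0⟩
        rw [← Finset.sum_filter, hfil, Finset.sum_singleton,
          if_pos (hcond.mpr ⟨S₀, hS₀, hu0, hv0⟩)]
      · rw [← Finset.sum_filter,
          Finset.filter_eq_empty_iff.mpr (fun S hS h => hex ⟨S, hS, h⟩),
          Finset.sum_empty, if_neg (fun h => hex (hcond.mp h))]
  rw [Finset.sum_congr rfl step, ← Finset.sum_filter, Finset.sum_const,
    smul_eq_mul, mul_comm]
end

section
/- With the edge-features construction (one feature per edge of a graph G', where the feature assigns the two endpoints a shared value and all other vertices unique values), a partition of the vertices into teams of size k ≥ 3 has total faultline potential equal to zero if and only if every team is an independent set in G'. -/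
open Classical Finset

/-- With the edge-features construction, the total faultline potential of a
partition into teams of size k ≥ 3 is zero iff every team is an independent set. -/
theorem faultline_zero_iff_independent
    {V W : Type*} [Fintype V] [DecidableEq V]
    (G : SimpleGraph V) [DecidableRel G.Adj]
    (F : Sym2 V → V → W)
    (hF : ∀ e ∈ G.edgeFinset, ∀ u v : V, e = s(u, v) →
      F e u = F e v ∧ (∀ w : V, w ∉ e → F e w ≠ F e u) ∧
        (∀ w w' : V, w ∉ e → w' ∉ e → w ≠ w' → F e w ≠ F e w'))
    (P : Finset (Finset V)) (k : ℕ) (hk : 3 ≤ k)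
    (hcard : ∀ S ∈ P, S.card = k)
    (hpart : ∀ x : V, ∃! S, S ∈ P ∧ x ∈ S) :
    (∑ S ∈ P, ∑ e ∈ G.edgeFinset, conflictCount S (F e)) = 0 ↔
      ∀ S ∈ P, ∀ u ∈ S, ∀ v ∈ S, ¬ G.Adj u v := by
  constructor
  · intro h S hS u hu v hv hadj
    have huv : u ≠ v := hadj.ne
    have he : s(u, v) ∈ G.edgeFinset := by
      rw [SimpleGraph.mem_edgeFinset]; exact hadj
    obtain ⟨hEq, hNe, hInj⟩ := hF _ he u v rfl
    obtain ⟨w, hw⟩ : (S \ {u, v}).Nonempty := by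
      rw [Finset.nonempty_iff_ne_empty]
      intro hE
      have hsub : S ⊆ {u, v} := Finset.sdiff_eq_empty_iff_subset.mp hE
      have h1 := Finset.card_le_card hsub
      have h2 : ({u, v} : Finset V).card ≤ 2 := by
        have := Finset.card_insert_le u ({v} : Finset V)
        simpa using this
      have := hcard S hS
      omega
    rw [Finset.mem_sdiff, Finset.mem_insert, Finset.mem_singleton] at hw
    push_neg at hw
    obtain ⟨hwS, hwu, hwv⟩ := hw
    have hzero := (Finset.sum_eq_zero_iff.mp h) S hS
    have hzero2 := (Finset.sum_eq_zero_iff.mp hzero) _ he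
    have hτ : ({u, v, w} : Finset V) ∈
        (S.powersetCard 3).filter (fun τ => isConflict (F s(u, v)) τ) := by
      rw [Finset.mem_filter, Finset.mem_powersetCard]
      refine ⟨⟨?_, ?_⟩, ?_⟩
      · intro x hx
        simp only [Finset.mem_insert, Finset.mem_singleton] at hx
        rcases hx with rfl | rfl | rfl <;> assumption
      · rw [Finset.card_insert_of_notMem (by simp [huv, Ne.symm hwu]),
          Finset.card_insert_of_notMem (by simp [Ne.symm hwv]), Finset.card_singleton]
      · refine ⟨u, by simp, v, by simp, w, by simp, huv, Ne.symm hwu, Ne.symm hwv, hEq, ?_⟩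
        exact hNe w (by simp [Sym2.mem_iff, hwu, hwv])
    have : conflictCount S (F s(u, v)) ≠ 0 := by
      unfold conflictCount
      exact Finset.card_ne_zero_of_mem hτ
    exact this hzero2
  · intro hind
    refine Finset.sum_eq_zero (fun S hS => Finset.sum_eq_zero (fun e he => ?_))
    induction e using Sym2.ind with
    | _ u v =>
      have hadj : G.Adj u v := by rwa [SimpleGraph.mem_edgeFinset] at he
      obtain ⟨hEq, hNe, hInj⟩ := hF _ he u v rfl
      unfold conflictCount
      rw [Finset.card_eq_zero, Finset.filter_eq_empty_iff]
      intro τ hτ hconf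
      rw [Finset.mem_powersetCard] at hτ
      obtain ⟨i, hi, j, hj, m, hm, hij, him, hjm, hfij, hfm⟩ := hconf
      have hie : i ∈ s(u, v) := by
        by_contra hie
        by_cases hje : j ∈ s(u, v)
        · rw [Sym2.mem_iff] at hje
          rcases hje with rfl | rfl
          · exact hNe i hie hfij
          · exact hNe i hie (hfij.trans hEq.symm)
        · exact hInj i j hie hje hij hfij
      have hje : j ∈ s(u, v) := by
        by_contra hje
        rw [Sym2.mem_iff] at hie
        rcases hie with rfl | rfl
        · exact hNe j hje hfij.symm
        · exact hNe j hje (hfij.symm.trans hEq.symm)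
      rw [Sym2.mem_iff] at hie hje
      have huS : u ∈ S ∧ v ∈ S := by
        rcases hie with rfl | rfl <;> rcases hje with rfl | rfl
        · exact absurd rfl hij
        · exact ⟨hτ.1 hi, hτ.1 hj⟩
        · exact ⟨hτ.1 hj, hτ.1 hi⟩
        · exact absurd rfl hij
      exact hind S hS u huS.1 v huS.2 hadj
end
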